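/- Let F be a star forest in the graph A for which there exists a set C ⊆ V(A) \ {x,y} meeting each connected component of F in exactly one vertex and such that every edge of F is incident with a vertex of C (i.e., a choice of centers of F avoiding x and y). Then A − E(F) contains a subgraph isomorphic to K4. -/

import Mathlib

/-- The complete graph on four vertices. -/
def K4 : SimpleGraph (Fin 4) := ⊤

/-- `G` contains a subgraph isomorphic to the pattern graph `P`. -/
def ContainsSub {W V : Type*} (P : SimpleGraph W) (G : SimpleGraph V) : Prop :=
  ∃ f : W ↪ V, ∀ ⦃a b : W⦄, P.Adj a b → G.Adj (f a) (f b)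

/-- The graph `A`: three disjoint paths on 4 vertices (`Sum.inr (i, 0) - ⋯ - Sum.inr (i, 3)`
for `i : Fin 3`), together with two adjacent vertices `x = Sum.inl 0` and `y = Sum.inl 1`,
each adjacent to all 12 path vertices.  The edge `xy` is the handle of `A`. -/
def GA : SimpleGraph (Sum (Fin 2) (Fin 3 × Fin 4)) :=
  SimpleGraph.fromRel (fun a b =>
    (a = Sum.inl 0 ∧ b = Sum.inl 1) ∨
    ((a = Sum.inl 0 ∨ a = Sum.inl 1) ∧ ∃ p : Fin 3 × Fin 4, b = Sum.inr p) ∨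
    (∃ i : Fin 3, ∃ j : Fin 3, a = Sum.inr (i, j.castSucc) ∧ b = Sum.inr (i, j.succ)))

lemma embAux (i : Fin 3) (j : Fin 3) :
    Function.Injective
      (![Sum.inl 0, Sum.inl 1, Sum.inr (i, j.castSucc), Sum.inr (i, j.succ)] :
        Fin 4 → Sum (Fin 2) (Fin 3 × Fin 4)) := by
  have hjne : (j.castSucc : Fin 4) ≠ j.succ := (Fin.castSucc_lt_succ : j.castSucc < j.succ).ne
  intro a b h
  fin_cases a <;> fin_cases b <;> simp_all

/-- Let `F` be a subgraph of `A` admitting a set `C` of vertices avoiding `x` and `y`,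
meeting each connected component of `F` in exactly one vertex, and such that every edge
of `F` is incident with a vertex of `C` (a choice of centers of a star forest avoiding
`x` and `y`).  Then `A − E(F)` contains a subgraph isomorphic to `K4`. -/
theorem statement6 (F : GA.Subgraph) (C : Set (Sum (Fin 2) (Fin 3 × Fin 4)))
    (hx : Sum.inl 0 ∉ C) (hy : Sum.inl 1 ∉ C)
    (hmeet : ∀ K : F.coe.ConnectedComponent,
      ∃! v : F.verts, F.coe.connectedComponentMk v = K ∧ (v : Sum (Fin 2) (Fin 3 × Fin 4)) ∈ C)
    (hcov : ∀ ⦃p q⦄, F.Adj p q → p ∈ C ∨ q ∈ C) :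
    ContainsSub K4 (GA \ F.spanningCoe) := by
  classical
  -- xy is not an edge of F
  have hxy : ¬ F.Adj (Sum.inl 0) (Sum.inl 1) := fun h => (hcov h).elim hx hy
  -- two C-vertices in the same component are equal
  have key : ∀ (u v : Sum (Fin 2) (Fin 3 × Fin 4)) (hu : u ∈ F.verts) (hv : v ∈ F.verts),
      F.coe.Reachable ⟨u, hu⟩ ⟨v, hv⟩ → u ∈ C → v ∈ C → u = v := by
    intro u v hu hv hr huC hvC
    obtain ⟨w, _, huniq⟩ := hmeet (F.coe.connectedComponentMk ⟨u, hu⟩)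
    have h1 := huniq ⟨u, hu⟩ ⟨rfl, huC⟩
    have h2 := huniq ⟨v, hv⟩ ⟨SimpleGraph.ConnectedComponent.sound hr.symm, hvC⟩
    have := h1.trans h2.symm
    exact congrArg Subtype.val this
  -- all F-neighbors of x coincide
  have nbrx : ∀ u v, F.Adj (Sum.inl 0) u → F.Adj (Sum.inl 0) v → u = v := by
    intro u v h1 h2
    have huC : u ∈ C := (hcov h1).resolve_left hx
    have hvC : v ∈ C := (hcov h2).resolve_left hx
    have a1 : F.coe.Adj ⟨u, h1.snd_mem⟩ ⟨Sum.inl 0, h1.fst_mem⟩ := h1.symm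
    have a2 : F.coe.Adj (⟨Sum.inl 0, h1.fst_mem⟩ : F.verts) ⟨v, h2.snd_mem⟩ := h2
    exact key u v h1.snd_mem h2.snd_mem (a1.reachable.trans a2.reachable) huC hvC
  have nbry : ∀ u v, F.Adj (Sum.inl 1) u → F.Adj (Sum.inl 1) v → u = v := by
    intro u v h1 h2
    have huC : u ∈ C := (hcov h1).resolve_left hy
    have hvC : v ∈ C := (hcov h2).resolve_left hy
    have a1 : F.coe.Adj ⟨u, h1.snd_mem⟩ ⟨Sum.inl 1, h1.fst_mem⟩ := h1.symm
    have a2 : F.coe.Adj (⟨Sum.inl 1, h1.fst_mem⟩ : F.verts) ⟨v, h2.snd_mem⟩ := h2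
    exact key u v h1.snd_mem h2.snd_mem (a1.reachable.trans a2.reachable) huC hvC
  -- a path avoiding all F-neighbors of x and y
  have hpath : ∃ i : Fin 3, ∀ j : Fin 4,
      ¬ F.Adj (Sum.inl 0) (Sum.inr (i, j)) ∧ ¬ F.Adj (Sum.inl 1) (Sum.inr (i, j)) := by
    by_contra h
    push_neg at h
    have h' : ∀ i : Fin 3, ∃ j : Fin 4,
        F.Adj (Sum.inl 0) (Sum.inr (i, j)) ∨ F.Adj (Sum.inl 1) (Sum.inr (i, j)) := by
      intro i
      obtain ⟨j, hj⟩ := h i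
      by_cases h0 : F.Adj (Sum.inl 0) (Sum.inr (i, j))
      · exact ⟨j, Or.inl h0⟩
      · exact ⟨j, Or.inr (hj h0)⟩
    obtain ⟨j0, h0⟩ := h' 0
    obtain ⟨j1, h1⟩ := h' 1
    obtain ⟨j2, h2⟩ := h' 2
    rcases h0 with h0 | h0 <;> rcases h1 with h1 | h1 <;> rcases h2 with h2 | h2 <;>
      first
        | (have := nbrx _ _ h0 h1; simp only [Sum.inr.injEq, Prod.mk.injEq] at this;
           exact absurd this.1 (by decide))
        | (have := nbrx _ _ h0 h2; simp only [Sum.inr.injEq, Prod.mk.injEq] at this;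
           exact absurd this.1 (by decide))
        | (have := nbrx _ _ h1 h2; simp only [Sum.inr.injEq, Prod.mk.injEq] at this;
           exact absurd this.1 (by decide))
        | (have := nbry _ _ h0 h1; simp only [Sum.inr.injEq, Prod.mk.injEq] at this;
           exact absurd this.1 (by decide))
        | (have := nbry _ _ h0 h2; simp only [Sum.inr.injEq, Prod.mk.injEq] at this;
           exact absurd this.1 (by decide))
        | (have := nbry _ _ h1 h2; simp only [Sum.inr.injEq, Prod.mk.injEq] at this;
           exact absurd this.1 (by decide))
  obtain ⟨i, hi⟩ := hpath
  -- some edge of path i is not in F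
  have hedge : ∃ j : Fin 3, ¬ F.Adj (Sum.inr (i, j.castSucc)) (Sum.inr (i, j.succ)) := by
    by_contra h
    push_neg at h
    have e0 : F.Adj (Sum.inr (i, (0 : Fin 4))) (Sum.inr (i, (1 : Fin 4))) := h 0
    have e1 : F.Adj (Sum.inr (i, (1 : Fin 4))) (Sum.inr (i, (2 : Fin 4))) := h 1
    have e2 : F.Adj (Sum.inr (i, (2 : Fin 4))) (Sum.inr (i, (3 : Fin 4))) := h 2
    have r01 : F.coe.Adj ⟨_, e0.fst_mem⟩ ⟨_, e0.snd_mem⟩ := e0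
    have r12 : F.coe.Adj ⟨_, e1.fst_mem⟩ ⟨_, e1.snd_mem⟩ := e1
    have r23 : F.coe.Adj ⟨_, e2.fst_mem⟩ ⟨_, e2.snd_mem⟩ := e2
    rcases hcov e0 with c1 | c1 <;> rcases hcov e2 with c2 | c2
    · have := key _ _ e0.fst_mem e2.fst_mem (r01.reachable.trans r12.reachable) c1 c2
      simp only [Sum.inr.injEq, Prod.mk.injEq] at this
      exact absurd this.2 (by decide)
    · have := key _ _ e0.fst_mem e2.snd_mem
        (r01.reachable.trans (r12.reachable.trans r23.reachable)) c1 c2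
      simp only [Sum.inr.injEq, Prod.mk.injEq] at this
      exact absurd this.2 (by decide)
    · have := key _ _ e0.snd_mem e2.fst_mem r12.reachable c1 c2
      simp only [Sum.inr.injEq, Prod.mk.injEq] at this
      exact absurd this.2 (by decide)
    · have := key _ _ e0.snd_mem e2.snd_mem (r12.reachable.trans r23.reachable) c1 c2
      simp only [Sum.inr.injEq, Prod.mk.injEq] at this
      exact absurd this.2 (by decide)
  obtain ⟨j, hj⟩ := hedge
  have hjne : (j.castSucc : Fin 4) ≠ j.succ := (Fin.castSucc_lt_succ : j.castSucc < j.succ).ne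
  -- GA adjacencies
  have A_xy : GA.Adj (Sum.inl 0) (Sum.inl 1) := by
    rw [GA, SimpleGraph.fromRel_adj]
    exact ⟨by simp, Or.inl (Or.inl ⟨rfl, rfl⟩)⟩
  have A_xu : ∀ p : Fin 3 × Fin 4, GA.Adj (Sum.inl 0) (Sum.inr p) := by
    intro p
    rw [GA, SimpleGraph.fromRel_adj]
    exact ⟨by simp, Or.inl (Or.inr (Or.inl ⟨Or.inl rfl, p, rfl⟩))⟩
  have A_yu : ∀ p : Fin 3 × Fin 4, GA.Adj (Sum.inl 1) (Sum.inr p) := by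
    intro p
    rw [GA, SimpleGraph.fromRel_adj]
    exact ⟨by simp, Or.inl (Or.inr (Or.inl ⟨Or.inr rfl, p, rfl⟩))⟩
  have A_uv : GA.Adj (Sum.inr (i, j.castSucc)) (Sum.inr (i, j.succ)) := by
    rw [GA, SimpleGraph.fromRel_adj]
    exact ⟨by simp [hjne], Or.inl (Or.inr (Or.inr ⟨i, j, rfl, rfl⟩))⟩
  -- building edges of GA \ F.spanningCoe
  have goal : ∀ a b, GA.Adj a b → ¬ F.Adj a b → (GA \ F.spanningCoe).Adj a b := by
    intro a b h1 h2
    rw [SimpleGraph.sdiff_adj]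
    exact ⟨h1, h2⟩
  refine ⟨⟨![Sum.inl 0, Sum.inl 1, Sum.inr (i, j.castSucc), Sum.inr (i, j.succ)], ?_⟩, ?_⟩
  · exact embAux i j
  · intro a b hab
    have hne : a ≠ b := hab.ne
    fin_cases a <;> fin_cases b <;> simp only [Matrix.cons_val_zero, Matrix.cons_val_one,
      Matrix.head_cons, Matrix.cons_val_two, Matrix.tail_cons, Matrix.cons_val_three,
      Function.Embedding.coeFn_mk] <;>
      first
        | exact absurd rfl hne
        | exact goal _ _ A_xy hxy
        | exact goal _ _ A_xy.symm (fun h => hxy h.symm)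
        | exact goal _ _ (A_xu _) (hi _).1
        | exact goal _ _ (A_xu _).symm (fun h => (hi _).1 h.symm)
        | exact goal _ _ (A_yu _) (hi _).2
        | exact goal _ _ (A_yu _).symm (fun h => (hi _).2 h.symm)
        | exact goal _ _ A_uv hj
        | exact goal _ _ A_uv.symm (fun h => hj h.symm)
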